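/- Let k be a field and A₂ = k[U,V,W]/(U³ - VW). Then the syzygy modules Syz_{A₂}(U, W³) and Syz_{A₂}(U, W) are isomorphic as A₂-modules; explicitly, Syz_{A₂}(U, W³) is generated by τ₁ = (-W³, U) and τ₂ = (-U²W², V), which satisfy the relation V·τ₁ - U·τ₂ = 0. -/

import Mathlib

set_option maxHeartbeats 1000000
set_option synthInstance.maxHeartbeats 1000000

/-- The linear map `(a₁,…,aₙ) ↦ Σ aᵢ·gᵢ`; the syzygy module
`Syz_R(g₁,…,gₙ)` is its kernel. -/
noncomputable def syzMap {R : Type*} [CommRing R] {n : ℕ} (g : Fin n → R) :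
    (Fin n → R) →ₗ[R] R :=
  ∑ i, (LinearMap.proj i : (Fin n → R) →ₗ[R] R).smulRight (g i)

noncomputable section Stmt19aux
open MvPolynomial

variable (k : Type*) [Field k]

abbrev A2 := MvPolynomial (Fin 3) k ⧸
  Ideal.span ({X 0 ^ 3 - X 1 * X 2} : Set (MvPolynomial (Fin 3) k))

abbrev Rk := MvPolynomial (Fin 2) k

def fp : Polynomial (Rk k) :=
  Polynomial.X ^ 3 - Polynomial.C (X 0 * X 1)

lemma fp_monic : (fp k).Monic := by
  exact Polynomial.monic_X_pow_sub_C _ (by norm_num)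

lemma fp_natDegree : (fp k).natDegree = 3 := by
  rw [fp]
  compute_degree!

def uu : A2 k := Ideal.Quotient.mk _ (X 0)
def vv : A2 k := Ideal.Quotient.mk _ (X 1)
def ww : A2 k := Ideal.Quotient.mk _ (X 2)

def ee : A2 k ≃+* AdjoinRoot (fp k) :=
  Ideal.quotientEquiv _ _ (MvPolynomial.finSuccEquiv k 2).toRingEquiv <| by
    rw [Ideal.map_span, Set.image_singleton]
    congr 1
    have h1 : (1 : Fin 3) = Fin.succ 0 := rfl
    have h2 : (2 : Fin 3) = Fin.succ 1 := rfl
    simp only [fp, RingEquiv.coe_toRingHom, AlgEquiv.toRingEquiv_eq_coe, AlgEquiv.coe_ringEquiv, map_sub, map_pow, map_mul,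
      h1, h2, MvPolynomial.finSuccEquiv_X_zero, MvPolynomial.finSuccEquiv_X_succ]


lemma ee_mk (p : MvPolynomial (Fin 3) k) :
    ee k (Ideal.Quotient.mk _ p) = AdjoinRoot.mk (fp k) (MvPolynomial.finSuccEquiv k 2 p) :=
  Ideal.quotientEquiv_mk _ _ _ _ p

lemma ee_uu : ee k (uu k) = AdjoinRoot.root (fp k) := by
  rw [uu, ee_mk, MvPolynomial.finSuccEquiv_X_zero]; rfl

lemma ee_vv : ee k (vv k) = AdjoinRoot.of (fp k) (X 0) := by
  have h1 : (1 : Fin 3) = Fin.succ 0 := rfl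
  rw [vv, ee_mk, h1, MvPolynomial.finSuccEquiv_X_succ]; rfl

lemma ee_ww : ee k (ww k) = AdjoinRoot.of (fp k) (X 1) := by
  have h2 : (2 : Fin 3) = Fin.succ 1 := rfl
  rw [ww, ee_mk, h2, MvPolynomial.finSuccEquiv_X_succ]; rfl

end Stmt19aux

noncomputable section Stmt19aux2
open MvPolynomial

variable (k : Type*) [Field k]

def gg : Rk k →+* A2 k := MvPolynomial.eval₂Hom (algebraMap k (A2 k)) ![vv k, ww k]

lemma gg_V : gg k (X 0) = vv k := by simp [gg]
lemma gg_W : gg k (X 1) = ww k := by simp [gg]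

lemma ee_gg (r : Rk k) : ee k (gg k r) = AdjoinRoot.of (fp k) r := by
  have : ((ee k).toRingHom.comp (gg k)) = (AdjoinRoot.of (fp k)) := by
    apply MvPolynomial.ringHom_ext
    · intro a
      simp only [RingHom.comp_apply, RingEquiv.toRingHom_eq_coe, RingHom.coe_coe]
      have h1 : gg k (C a) = Ideal.Quotient.mk _ (C a : MvPolynomial (Fin 3) k) := by
        simp [gg]; rfl
      rw [h1, ee_mk]
      have h2 : (MvPolynomial.finSuccEquiv k 2) (C a : MvPolynomial (Fin 3) k)
          = Polynomial.C (C a : Rk k) := by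
        simp [MvPolynomial.finSuccEquiv_apply, MvPolynomial.eval₂Hom_C]
      rw [h2]; rfl
    · intro i
      fin_cases i
      · simp only [RingHom.comp_apply, RingEquiv.toRingHom_eq_coe, RingHom.coe_coe]
        rw [show (⟨0, by norm_num⟩ : Fin 2) = 0 from rfl, gg_V, ee_vv]
      · simp only [RingHom.comp_apply, RingEquiv.toRingHom_eq_coe, RingHom.coe_coe]
        rw [show (⟨1, by norm_num⟩ : Fin 2) = 1 from rfl, gg_W, ee_ww]
  exact RingHom.congr_fun this r

lemma repr_zero (y0 y1 y2 : Rk k)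
    (h : gg k y0 + gg k y1 * uu k + gg k y2 * (uu k)^2 = 0) :
    y0 = 0 ∧ y1 = 0 ∧ y2 = 0 := by
  have h2 := congrArg (ee k) h
  simp only [map_add, map_mul, map_pow, map_zero, ee_gg, ee_uu] at h2
  set q : Polynomial (Rk k) := Polynomial.C y0 + Polynomial.C y1 * Polynomial.X
      + Polynomial.C y2 * Polynomial.X^2 with hq
  have hmk : AdjoinRoot.mk (fp k) q = 0 := by
    rw [hq]
    simp only [map_add, map_mul, map_pow, AdjoinRoot.mk_X, AdjoinRoot.mk_C]
    exact h2
  have hdvd : fp k ∣ q := (AdjoinRoot.mk_eq_zero).mp hmk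
  have hq0 : q = 0 := by
    by_contra hne
    have h3 := Polynomial.natDegree_le_of_dvd hdvd hne
    rw [fp_natDegree] at h3
    have h4 : q.natDegree ≤ 2 := by rw [hq]; compute_degree
    omega
  refine ⟨?_, ?_, ?_⟩
  · have := congrArg (fun p => Polynomial.coeff p 0) hq0
    simpa [hq] using this
  · have := congrArg (fun p => Polynomial.coeff p 1) hq0
    simpa [hq] using this
  · have := congrArg (fun p => Polynomial.coeff p 2) hq0
    simpa [hq] using this

lemma exists_repr (a : A2 k) :
    ∃ y0 y1 y2 : Rk k, a = gg k y0 + gg k y1 * uu k + gg k y2 * (uu k)^2 := by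
  obtain ⟨p, hp⟩ := AdjoinRoot.mk_surjective (ee k a)
  set r := p %ₘ fp k with hr
  have hdeg : r.natDegree < 3 := by
    rcases eq_or_ne r 0 with h0 | h0
    · rw [h0]; simp
    · have hlt := Polynomial.degree_modByMonic_lt p (fp_monic k)
      rw [Polynomial.degree_eq_natDegree (fp_monic k).ne_zero, fp_natDegree] at hlt
      exact (Polynomial.natDegree_lt_iff_degree_lt h0).mpr (by exact_mod_cast hlt)
  refine ⟨r.coeff 0, r.coeff 1, r.coeff 2, ?_⟩
  apply (ee k).injective
  have hmkr : AdjoinRoot.mk (fp k) r = ee k a := by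
    rw [← hp]
    conv_rhs => rw [← Polynomial.modByMonic_add_div p (fp k)]
    simp [← hr]
  have hrsum : r = Polynomial.C (r.coeff 0) + Polynomial.C (r.coeff 1) * Polynomial.X
      + Polynomial.C (r.coeff 2) * Polynomial.X^2 := by
    conv_lhs => rw [Polynomial.as_sum_range' r 3 hdeg]
    simp only [Finset.sum_range_succ, Finset.sum_range_one,
      ← Polynomial.C_mul_X_pow_eq_monomial]
    ring
  rw [map_add, map_add, map_mul, map_mul, map_pow, ee_gg, ee_gg, ee_gg, ee_uu, ← hmkr]
  conv_lhs => rw [hrsum]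
  simp only [map_add, map_mul, map_pow, AdjoinRoot.mk_X, AdjoinRoot.mk_C]

lemma prime_V : Prime (X 0 : Rk k) := by
  rw [← MulEquiv.prime_iff (MvPolynomial.finSuccEquiv k 1).toMulEquiv]
  have h : (MvPolynomial.finSuccEquiv k 1).toMulEquiv (X 0 : Rk k) = Polynomial.X :=
    MvPolynomial.finSuccEquiv_X_zero
  rw [h]
  exact Polynomial.prime_X

lemma V_not_dvd_W : ¬ (X 0 : Rk k) ∣ X 1 := by
  rintro ⟨c, hc⟩
  have := congrArg (MvPolynomial.eval (fun i : Fin 2 => if i = 0 then (0:k) else 1)) hc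
  simp at this

lemma rel_u3 : (uu k)^3 = vv k * ww k := by
  rw [uu, vv, ww, ← map_pow, ← map_mul, ← sub_eq_zero, ← map_sub,
    Ideal.Quotient.eq_zero_iff_mem]
  exact Ideal.subset_span rfl

end Stmt19aux2

noncomputable section Stmt19aux3
open MvPolynomial

variable (k : Type*) [Field k]

lemma key_decomp (a b : A2 k) (hab : a * uu k + b * (ww k)^3 = 0) :
    ∃ p q : A2 k, p * (-((ww k)^3)) + q * (-((uu k)^2 * (ww k)^2)) = a ∧
      p * uu k + q * vv k = b := by
  obtain ⟨a0, a1, a2, ha⟩ := exists_repr k a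
  obtain ⟨b0, b1, b2, hb⟩ := exists_repr k b
  rw [ha, hb] at hab
  have key : gg k (a2 * (X 0 * X 1) + b0 * X 1^3)
      + gg k (a0 + b1 * X 1^3) * uu k
      + gg k (a1 + b2 * X 1^3) * (uu k)^2 = 0 := by
    simp only [map_add, map_mul, map_pow, gg_V, gg_W]
    linear_combination hab - gg k a2 * rel_u3 k
  obtain ⟨hE1, hE2, hE3⟩ := repr_zero k _ _ _ key
  have hW0 : (X 1 : Rk k) ≠ 0 := MvPolynomial.X_ne_zero 1
  have hV0 : (X 0 : Rk k) ≠ 0 := MvPolynomial.X_ne_zero 0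
  have h5 : (X 1 : Rk k) * (a2 * X 0 + b0 * X 1^2) = 0 := by linear_combination hE1
  have h6 : a2 * (X 0 : Rk k) + b0 * X 1^2 = 0 := (mul_eq_zero.mp h5).resolve_left hW0
  have hdvd : (X 0 : Rk k) ∣ b0 * X 1^2 := ⟨-a2, by linear_combination h6⟩
  have hVb0 : (X 0 : Rk k) ∣ b0 := by
    rcases (prime_V k).2.2 _ _ hdvd with h | h
    · exact h
    · exact absurd ((prime_V k).dvd_of_dvd_pow h) (V_not_dvd_W k)
  obtain ⟨c, hc⟩ := hVb0
  have h7 : (X 0 : Rk k) * (a2 + X 1^2 * c) = 0 := by linear_combination h6 - X 1 ^ 2 * hc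
  have ha2 : a2 = -(X 1^2 * c) := by
    have h8 := (mul_eq_zero.mp h7).resolve_left hV0
    linear_combination h8
  have ha0 : a0 = -(b1 * X 1^3) := by linear_combination hE2
  have ha1 : a1 = -(b2 * X 1^3) := by linear_combination hE3
  refine ⟨gg k b1 + gg k b2 * uu k, gg k c, ?_, ?_⟩
  · rw [ha, ha0, ha1, ha2]
    simp only [map_neg, map_mul, map_pow, gg_W]
    ring
  · rw [hb, hc]
    simp only [map_mul, gg_V]
    ring

lemma ww_sq_reg (z : A2 k) (h : (ww k)^2 * z = 0) : z = 0 := by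
  obtain ⟨z0, z1, z2, hz⟩ := exists_repr k z
  rw [hz] at h
  have key : gg k (X 1^2 * z0) + gg k (X 1^2 * z1) * uu k
      + gg k (X 1^2 * z2) * (uu k)^2 = 0 := by
    simp only [map_mul, map_pow, gg_W]
    linear_combination h
  obtain ⟨h0, h1, h2⟩ := repr_zero k _ _ _ key
  have hW2 : (X 1 : Rk k)^2 ≠ 0 := pow_ne_zero _ (MvPolynomial.X_ne_zero 1)
  have hz0 : z0 = 0 := by rcases mul_eq_zero.mp h0 with h | h; exact absurd h hW2; exact h
  have hz1 : z1 = 0 := by rcases mul_eq_zero.mp h1 with h | h; exact absurd h hW2; exact h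
  have hz2 : z2 = 0 := by rcases mul_eq_zero.mp h2 with h | h; exact absurd h hW2; exact h
  rw [hz, hz0, hz1, hz2]
  simp

end Stmt19aux3

section Stmt19main
open MvPolynomial

variable (k : Type*) [Field k]

lemma mem_ker_iff (g1 g2 : A2 k) (s : Fin 2 → A2 k) :
    s ∈ LinearMap.ker (syzMap ![g1, g2]) ↔ s 0 * g1 + s 1 * g2 = 0 := by
  rw [LinearMap.mem_ker]
  simp [syzMap, LinearMap.sum_apply, Fin.sum_univ_two, smul_eq_mul]

set_option maxHeartbeats 4000000 in
theorem stmt19aux :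
    Nonempty (LinearMap.ker (syzMap ![uu k, (ww k) ^ 3]) ≃ₗ[A2 k]
        LinearMap.ker (syzMap ![uu k, ww k])) ∧
      Submodule.span (A2 k) {![-((ww k) ^ 3), uu k], ![-((uu k) ^ 2 * (ww k) ^ 2), vv k]}
        = LinearMap.ker (syzMap ![uu k, (ww k) ^ 3]) ∧
      vv k • (![-((ww k) ^ 3), uu k] : Fin 2 → A2 k)
        - uu k • ![-((uu k) ^ 2 * (ww k) ^ 2), vv k] = 0 := by
  have hu3 : (uu k) ^ 3 = vv k * ww k := rel_u3 k
  set u := uu k with hu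
  set v := vv k with hv
  set w := ww k with hw
  set τ₁ : Fin 2 → A2 k := ![-(w ^ 3), u] with hτ₁
  set τ₂ : Fin 2 → A2 k := ![-(u ^ 2 * w ^ 2), v] with hτ₂
  have hspan : Submodule.span (A2 k) {τ₁, τ₂} = LinearMap.ker (syzMap ![u, w ^ 3]) := by
    apply le_antisymm
    · rw [Submodule.span_le]
      rintro t ht
      simp only [Set.mem_insert_iff, Set.mem_singleton_iff] at ht
      rcases ht with rfl | rfl
      · rw [SetLike.mem_coe, mem_ker_iff]
        show -(w ^ 3) * u + u * w ^ 3 = 0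
        ring
      · rw [SetLike.mem_coe, mem_ker_iff]
        show -(u ^ 2 * w ^ 2) * u + v * w ^ 3 = 0
        linear_combination (-(w ^ 2)) * hu3
    · intro x hx
      rw [mem_ker_iff] at hx
      obtain ⟨p, q, h1, h2⟩ := key_decomp k (x 0) (x 1) hx
      rw [Submodule.mem_span_pair]
      refine ⟨p, q, ?_⟩
      funext i
      fin_cases i
      · exact h1
      · exact h2
  have hrel : v • τ₁ - u • τ₂ = 0 := by
    funext i
    fin_cases i
    · show v * -(w ^ 3) - u * -(u ^ 2 * w ^ 2) = 0
      linear_combination (w ^ 2) * hu3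
    · show v * u - u * v = 0
      ring
  refine ⟨?_, hspan, hrel⟩
  let L : (Fin 2 → A2 k) →ₗ[A2 k] (Fin 2 → A2 k) :=
    { toFun := fun x => ![w ^ 2 * x 0, x 1]
      map_add' := by
        intro x y
        funext i
        fin_cases i <;> simp [mul_add]
      map_smul' := by
        intro c x
        funext i
        fin_cases i <;> simp [smul_eq_mul] <;> ring }
  have hmaps : ∀ x ∈ LinearMap.ker (syzMap ![u, w]),
      L x ∈ LinearMap.ker (syzMap ![u, w ^ 3]) := by
    intro x hx
    rw [mem_ker_iff] at hx
    rw [mem_ker_iff]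
    show w ^ 2 * x 0 * u + x 1 * w ^ 3 = 0
    linear_combination w ^ 2 * hx
  let Lres := L.restrict hmaps
  have hinj : Function.Injective Lres := by
    intro x y hxy
    have h0 : w ^ 2 * (x : Fin 2 → A2 k) 0 = w ^ 2 * (y : Fin 2 → A2 k) 0 :=
      congrFun (congrArg Subtype.val hxy) 0
    have h1 : (x : Fin 2 → A2 k) 1 = (y : Fin 2 → A2 k) 1 :=
      congrFun (congrArg Subtype.val hxy) 1
    have e0 : (x : Fin 2 → A2 k) 0 = (y : Fin 2 → A2 k) 0 := by
      have := ww_sq_reg k ((x : Fin 2 → A2 k) 0 - (y : Fin 2 → A2 k) 0)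
        (by rw [← hw]; linear_combination h0)
      linear_combination this
    apply Subtype.ext
    funext i
    fin_cases i
    · exact e0
    · exact h1
  have hsurj : Function.Surjective Lres := by
    intro y
    have hy : (y : Fin 2 → A2 k) ∈ Submodule.span (A2 k) {τ₁, τ₂} := by
      rw [hspan]; exact y.2
    rw [Submodule.mem_span_pair] at hy
    obtain ⟨p, q, hpq⟩ := hy
    have hxker : (![p * (-w) + q * (-(u ^ 2)), p * u + q * v] : Fin 2 → A2 k)
        ∈ LinearMap.ker (syzMap ![u, w]) := by
      rw [mem_ker_iff]
      show (p * (-w) + q * (-(u ^ 2))) * u + (p * u + q * v) * w = 0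
      linear_combination (-q) * hu3
    refine ⟨⟨_, hxker⟩, ?_⟩
    apply Subtype.ext
    have h0' : p * (-(w ^ 3)) + q * (-(u ^ 2 * w ^ 2)) = (y : Fin 2 → A2 k) 0 :=
      congrFun hpq 0
    have h1' : p * u + q * v = (y : Fin 2 → A2 k) 1 := congrFun hpq 1
    funext i
    fin_cases i
    · show w ^ 2 * (p * (-w) + q * (-(u ^ 2))) = (y : Fin 2 → A2 k) 0
      linear_combination h0'
    · exact h1'
  exact Nonempty.intro (LinearEquiv.ofBijective Lres ⟨hinj, hsurj⟩).symm

end Stmt19main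

set_option maxHeartbeats 4000000 in
/-- Over `A₂ = k[U,V,W]/(U³ - VW)`, the syzygy modules
`Syz(U, W³)` and `Syz(U, W)` are isomorphic as `A₂`-modules; explicitly,
`Syz(U, W³)` is generated by `τ₁ = (-W³, U)` and `τ₂ = (-U²W², V)`, which
satisfy `V·τ₁ - U·τ₂ = 0`. -/
theorem stmt_19 {k : Type*} [Field k] :
    let A₂ := MvPolynomial (Fin 3) k ⧸
      Ideal.span {MvPolynomial.X 0 ^ 3 - MvPolynomial.X 1 * MvPolynomial.X 2}
    let u : A₂ := Ideal.Quotient.mk _ (MvPolynomial.X 0)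
    let v : A₂ := Ideal.Quotient.mk _ (MvPolynomial.X 1)
    let w : A₂ := Ideal.Quotient.mk _ (MvPolynomial.X 2)
    let τ₁ : Fin 2 → A₂ := ![-(w ^ 3), u]
    let τ₂ : Fin 2 → A₂ := ![-(u ^ 2 * w ^ 2), v]
    Nonempty (LinearMap.ker (syzMap ![u, w ^ 3]) ≃ₗ[A₂]
        LinearMap.ker (syzMap ![u, w])) ∧
      Submodule.span A₂ {τ₁, τ₂} = LinearMap.ker (syzMap ![u, w ^ 3]) ∧
      v • τ₁ - u • τ₂ = 0 := by
  intro A₂ u v w τ₁ τ₂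
  exact stmt19aux k
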